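/- In the hitting-set graph G constructed from an instance (U, F_1, …, F_m) with |U| = n, if every set F_i is nonempty, then R = R_1 ∪ R_2 is a minimal vertex cover of G of size n + m(n+1). -/

import Mathlib

/-- Vertices of the hitting-set graph built from an instance with ground set
`Fin n` and sets `F_1, …, F_m`:  `l c u` (for `c ∈ Fin 2`) are the vertices
`l^1_u, l^2_u`, `r1 u` is `r_u`, and `r2 c i` (for `c ∈ Fin (n+1)`) is `r^c_i`. -/
inductive HV (n m : ℕ) : Type where
  | l : Fin 2 → Fin n → HV n m
  | r1 : Fin n → HV n m
  | r2 : Fin (n + 1) → Fin m → HV n m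

/-- The base relation inducing the edges of the hitting-set graph:
`{l^c_u, r_u}` for all `u, c`, and `{l^1_u, r^c_i}` whenever `u ∈ F i`. -/
def hsRel {n m : ℕ} (F : Fin m → Finset (Fin n)) : HV n m → HV n m → Prop
  | .l _ u, .r1 u' => u = u'
  | .l c u, .r2 _ i => c = 0 ∧ u ∈ F i
  | _, _ => False

/-- The hitting-set graph of the instance `F`. -/
def hsGraph {n m : ℕ} (F : Fin m → Finset (Fin n)) : SimpleGraph (HV n m) :=
  SimpleGraph.fromRel (hsRel F)

/-- The left side `L = {l^c_u}`. -/
def Lset (n m : ℕ) : Set (HV n m) := {x | ∃ c u, x = HV.l c u}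

/-- `R_1 = {r_u}`. -/
def R1set (n m : ℕ) : Set (HV n m) := {x | ∃ u, x = HV.r1 u}

/-- `R_2 = {r^c_i}`. -/
def R2set (n m : ℕ) : Set (HV n m) := {x | ∃ c i, x = HV.r2 c i}

/-- `S` is a vertex cover of `G`: it contains at least one endpoint of every edge. -/
def IsVC {α : Type*} (G : SimpleGraph α) (S : Set α) : Prop :=
  ∀ ⦃u v : α⦄, G.Adj u v → u ∈ S ∨ v ∈ S

/-- `S` is a minimal vertex cover of `G`. -/
def IsMinVC {α : Type*} (G : SimpleGraph α) (S : Set α) : Prop :=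
  IsVC G S ∧ ∀ T : Set α, T ⊂ S → ¬ IsVC G T

/-- If every `F i` is nonempty, then `R = R_1 ∪ R_2` is a minimal vertex cover
of the hitting-set graph, of size `n + m(n+1)`. -/
lemma R1_eq (n m : ℕ) : R1set n m = Set.range (HV.r1 : Fin n → HV n m) := by
  ext x; simp [R1set, Set.range, eq_comm]

lemma R2_eq (n m : ℕ) :
    R2set n m = Set.range (fun p : Fin (n+1) × Fin m => HV.r2 p.1 p.2) := by
  ext x
  constructor
  · rintro ⟨c, i, rfl⟩; exact ⟨(c, i), rfl⟩
  · rintro ⟨⟨c, i⟩, rfl⟩; exact ⟨c, i, rfl⟩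

theorem stmt9 {n m : ℕ} (F : Fin m → Finset (Fin n))
    (hF : ∀ i : Fin m, (F i).Nonempty) :
    IsMinVC (hsGraph F) (R1set n m ∪ R2set n m) ∧
    (R1set n m ∪ R2set n m).ncard = n + m * (n + 1) := by
  have key : ∀ u v : HV n m, hsRel F u v → v ∈ R1set n m ∪ R2set n m := by
    rintro (⟨c,u⟩|u|⟨c,i⟩) (⟨c',u'⟩|u'|⟨c',i'⟩) h <;>
      first
      | exact absurd h id
      | exact Or.inl ⟨_, rfl⟩
      | exact Or.inr ⟨_, _, rfl⟩
  have hvc : IsVC (hsGraph F) (R1set n m ∪ R2set n m) := by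
    rintro u v ⟨hne, h | h⟩
    · exact Or.inr (key _ _ h)
    · exact Or.inl (key _ _ h)
  refine ⟨⟨hvc, ?_⟩, ?_⟩
  · rintro T ⟨hTS, hne⟩ hT
    obtain ⟨x, hxS, hxT⟩ := Set.not_subset.mp hne
    have hLnot : ∀ c u, (HV.l c u : HV n m) ∉ T := by
      intro c u hmem
      rcases hTS hmem with ⟨_, h⟩ | ⟨_, _, h⟩ <;> cases h
    rcases hxS with ⟨u, rfl⟩ | ⟨c, i, rfl⟩
    · have hadj : (hsGraph F).Adj (HV.l 0 u) (HV.r1 u) :=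
        ⟨(by intro h; cases h), Or.inl rfl⟩
      rcases hT hadj with h | h
      · exact hLnot _ _ h
      · exact hxT h
    · obtain ⟨u, hu⟩ := hF i
      have hadj : (hsGraph F).Adj (HV.l 0 u) (HV.r2 c i) :=
        ⟨(by intro h; cases h), Or.inl ⟨rfl, hu⟩⟩
      rcases hT hadj with h | h
      · exact hLnot _ _ h
      · exact hxT h
  · have hdisj : Disjoint (R1set n m) (R2set n m) := by
      rw [Set.disjoint_left]
      rintro x ⟨u, rfl⟩ ⟨c, i, h⟩
      cases h
    have h1 : (R1set n m).ncard = n := by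
      rw [R1_eq, ← Set.image_univ, Set.ncard_image_of_injective _ (fun a b h => by injection h),
        Set.ncard_univ]
      simp
    have h2 : (R2set n m).ncard = m * (n + 1) := by
      rw [R2_eq, ← Set.image_univ, Set.ncard_image_of_injective _ (fun a b h => by
        injection h with h1 h2; exact Prod.ext h1 h2), Set.ncard_univ]
      simp [Nat.card_eq_fintype_card, mul_comm]
    have hf1 : (R1set n m).Finite := by
      rw [R1_eq]; exact Set.finite_range _
    have hf2 : (R2set n m).Finite := by
      rw [R2_eq]; exact Set.finite_range _
    rw [Set.ncard_union_eq hdisj hf1 hf2, h1, h2]
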